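/- Suppose for each p = 1,…,Q, the Q-dimensional truncated displacement vector satisfies ρⁿ P(b_n^{-1}(X₁^{(Q)},…,X_B^{(Q)}) ∈ ·) → λ^{(B)} in the Hult–Lindskog sense on ℝ^B\{0}, and that the random vector à (of branching data) is independent of the displacement vector and takes finitely many values. Then jointly ρⁿ P(b_n^{-1} X̃ ∈ ·, Ã ∈ ·) converges in the Hult–Lindskog sense to τ ⊗ 𝒢, where 𝒢 is the law of Ã, X̃ is a finite concatenation of independent copies of (X₁^{(Q)},…,X_B^{(Q)}), and τ = Σ over blocks of the measure that puts λ^{(B)} on one block of coordinates and δ₀ on all others. -/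

import Mathlib

open MeasureTheory ProbabilityTheory Filter Topology

noncomputable def bump {E : Type*} [SeminormedAddGroup E] (c : ℝ) (y : E) : ℝ :=
  min 1 (max (2 * ‖y‖ / c - 1) 0)

section bumps
variable {E : Type*} [SeminormedAddGroup E]

lemma bump_nonneg (c : ℝ) (y : E) : 0 ≤ bump c y := le_min one_pos.le (le_max_right _ _)

lemma bump_le_one (c : ℝ) (y : E) : bump c y ≤ 1 := min_le_left _ _

lemma bump_abs_le_one (c : ℝ) (y : E) : |bump c y| ≤ 1 :=
  abs_le.2 ⟨le_trans (by norm_num) (bump_nonneg c y), bump_le_one c y⟩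

lemma continuous_bump (c : ℝ) : Continuous (bump (E := E) c) := by
  unfold bump; fun_prop

lemma bump_eq_zero {c : ℝ} (hc : 0 < c) {y : E} (h : ‖y‖ < c / 2) : bump c y = 0 := by
  have : 2 * ‖y‖ / c - 1 < 0 := by
    rw [sub_neg, div_lt_one hc]; linarith
  simp [bump, max_eq_right this.le]

lemma bump_eq_one {c : ℝ} (hc : 0 < c) {y : E} (h : c ≤ ‖y‖) : bump c y = 1 := by
  have h1 : (1:ℝ) ≤ 2 * ‖y‖ / c - 1 := by
    rw [le_sub_iff_add_le, le_div_iff₀ hc]; linarith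
  rw [bump, max_eq_left (le_trans one_pos.le h1), min_eq_left h1]

lemma bump_anti {c c' : ℝ} (hc : 0 < c) (hcc : c ≤ c') (y : E) : bump c' y ≤ bump c y := by
  refine min_le_min le_rfl (max_le_max (sub_le_sub_right ?_ 1) le_rfl)
  exact div_le_div_of_nonneg_left (by positivity) hc hcc

lemma tendsto_bump_atTop (y : E) :
    Tendsto (fun k : ℕ => bump (k : ℝ) y) atTop (𝓝 0) := by
  refine tendsto_const_nhds.congr' ?_
  filter_upwards [eventually_gt_atTop (⌈2 * ‖y‖⌉₊ + 1)] with k hk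
  have hk0 : (0:ℝ) < k := by exact_mod_cast (Nat.succ_pos _).trans hk
  refine (bump_eq_zero hk0 ?_).symm
  have : 2 * ‖y‖ < k := by
    calc 2 * ‖y‖ ≤ (⌈2 * ‖y‖⌉₊ : ℝ) := Nat.le_ceil _
    _ < k := by exact_mod_cast Nat.lt_of_succ_lt hk
  linarith

end bumps

lemma integrable_of_bdd {Ω : Type*} [MeasurableSpace Ω] {P : Measure Ω} [IsFiniteMeasure P]
    {f : Ω → ℝ} (hf : Measurable f) {C : ℝ} (h : ∀ ω, |f ω| ≤ C) : Integrable f P :=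
  ⟨hf.aestronglyMeasurable, HasFiniteIntegral.of_bounded
    (ae_of_all _ (by simpa [Real.norm_eq_abs] using h))⟩

lemma norm_single {L : ℕ} {E : Type*} [NormedAddCommGroup E] (l : Fin L) (y : E) :
    ‖(fun l' => if l' = l then y else 0 : Fin L → E)‖ = ‖y‖ := by
  apply le_antisymm
  · refine (pi_norm_le_iff_of_nonneg (norm_nonneg y)).2 fun l' => ?_
    by_cases h : l' = l <;> simp [h]
  · simpa using norm_le_pi_norm (fun l' => if l' = l then y else 0 : Fin L → E) l

lemma pointwise_bound {L : ℕ} {E : Type*} [NormedAddCommGroup E]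
    (F : (Fin L → E) → ℝ) (C δ η R ε₁ : ℝ)
    (hC : ∀ z, |F z| ≤ C) (hδ : 0 < δ) (hδF : ∀ z, ‖z‖ < δ → F z = 0)
    (hη : 0 < η) (hηδ : η ≤ δ / 2) (hδR : δ ≤ R)
    (hε₁ : 0 ≤ ε₁)
    (hUC : ∀ u v : Fin L → E, ‖u‖ ≤ R → ‖v‖ ≤ R → ‖u - v‖ < η → |F u - F v| ≤ ε₁)
    (z : Fin L → E) :
    |F z - ∑ l, F (fun l' => if l' = l then z l else 0)| ≤
      ε₁ * ∑ l, bump δ (z l)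
      + (L + 1) * C * ((∑ p ∈ (Finset.univ : Finset (Fin L)).offDiag,
            bump η (z p.1) * bump η (z p.2))
          + ∑ l, bump R (z l)) := by
  have hC0 : 0 ≤ C := le_trans (abs_nonneg _) (hC 0)
  have hηδ' : η < δ := lt_of_le_of_lt hηδ (by linarith)
  have hR0 : 0 < R := lt_of_lt_of_le hδ hδR
  have hpair_nonneg : (0:ℝ) ≤ ∑ p ∈ (Finset.univ : Finset (Fin L)).offDiag,
      bump η (z p.1) * bump η (z p.2) :=
    Finset.sum_nonneg fun p _ => mul_nonneg (bump_nonneg _ _) (bump_nonneg _ _)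
  have htail_nonneg : (0:ℝ) ≤ ∑ l, bump R (z l) :=
    Finset.sum_nonneg fun l _ => bump_nonneg _ _
  have hfirst_nonneg : (0:ℝ) ≤ ε₁ * ∑ l, bump δ (z l) :=
    mul_nonneg hε₁ (Finset.sum_nonneg fun l _ => bump_nonneg _ _)
  have hbig : |F z - ∑ l, F (fun l' => if l' = l then z l else 0)| ≤ (L + 1) * C := by
    calc |F z - ∑ l, F (fun l' => if l' = l then z l else 0)|
        ≤ |F z| + |∑ l, F (fun l' => if l' = l then z l else 0)| := abs_sub _ _
      _ ≤ C + ∑ l : Fin L, C := by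
          gcongr
          · exact hC z
          · exact le_trans (Finset.abs_sum_le_sum_abs _ _)
              (Finset.sum_le_sum fun l _ => hC _)
      _ = (L + 1) * C := by simp [Finset.sum_const]; ring
  by_cases h2 : ∃ p ∈ (Finset.univ : Finset (Fin L)).offDiag, η ≤ ‖z p.1‖ ∧ η ≤ ‖z p.2‖
  · obtain ⟨p, hp, h1, h2'⟩ := h2
    have hone : (1:ℝ) ≤ ∑ q ∈ (Finset.univ : Finset (Fin L)).offDiag,
        bump η (z q.1) * bump η (z q.2) := by
      have heq : bump η (z p.1) * bump η (z p.2) = 1 := by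
        rw [bump_eq_one hη h1, bump_eq_one hη h2', mul_one]
      calc (1:ℝ) = bump η (z p.1) * bump η (z p.2) := heq.symm
        _ ≤ _ := Finset.single_le_sum (f := fun q : Fin L × Fin L => bump η (z q.1) * bump η (z q.2))
            (fun q _ => mul_nonneg (bump_nonneg _ _) (bump_nonneg _ _)) hp
    calc |F z - ∑ l, F (fun l' => if l' = l then z l else 0)| ≤ (L+1) * C := hbig
      _ = (L+1) * C * 1 := by ring
      _ ≤ _ := by
          refine le_add_of_nonneg_of_le hfirst_nonneg ?_
          exact mul_le_mul_of_nonneg_left (le_add_of_le_of_nonneg hone htail_nonneg)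
            (mul_nonneg (by positivity) hC0)
  · push_neg at h2
    by_cases hR : ∃ l, R ≤ ‖z l‖
    · obtain ⟨l₀, hl₀⟩ := hR
      have hone : (1:ℝ) ≤ ∑ l, bump R (z l) := by
        calc (1:ℝ) = bump R (z l₀) := (bump_eq_one hR0 hl₀).symm
          _ ≤ _ := Finset.single_le_sum (f := fun l => bump R (z l))
              (fun l _ => bump_nonneg _ _) (Finset.mem_univ _)
      calc |F z - ∑ l, F (fun l' => if l' = l then z l else 0)| ≤ (L+1) * C := hbig
        _ = (L+1) * C * 1 := by ring
        _ ≤ _ := by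
            refine le_add_of_nonneg_of_le hfirst_nonneg ?_
            exact mul_le_mul_of_nonneg_left (le_add_of_nonneg_of_le hpair_nonneg hone)
              (mul_nonneg (by positivity) hC0)
    · push_neg at hR
      by_cases hbigδ : ∃ l₀, δ ≤ ‖z l₀‖
      · obtain ⟨l₀, hl₀⟩ := hbigδ
        have hsmall : ∀ l, l ≠ l₀ → ‖z l‖ < η := by
          intro l hl
          have h := h2 (l, l₀) (by simp [Finset.mem_offDiag, hl])
          rcases lt_or_ge ‖z l‖ η with h' | h'
          · exact h'
          · exact absurd (h h') (not_lt.2 (le_trans hηδ'.le hl₀))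
        have hT : ∑ l, F (fun l' => if l' = l then z l else 0)
            = F (fun l' => if l' = l₀ then z l₀ else 0) := by
          refine Finset.sum_eq_single l₀ (fun l _ hl => ?_) (by simp)
          refine hδF _ ?_
          rw [norm_single]
          exact lt_of_lt_of_le (lt_of_lt_of_le (hsmall l hl) hηδ) (by linarith)
        have hUCz : |F z - F (fun l' => if l' = l₀ then z l₀ else 0)| ≤ ε₁ := by
          refine hUC _ _ ?_ ?_ ?_
          · exact (pi_norm_le_iff_of_nonneg hR0.le).2 fun l => (hR l).le
          · rw [norm_single]; exact (hR l₀).le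
          · refine (pi_norm_lt_iff hη).2 fun l => ?_
            by_cases hl : l = l₀
            · simp [hl, hη]
            · simpa [Pi.sub_apply, hl] using hsmall l hl
        have hbumpδ : bump δ (z l₀) = 1 := bump_eq_one hδ hl₀
        calc |F z - ∑ l, F (fun l' => if l' = l then z l else 0)| = _ := by rw [hT]
          _ ≤ ε₁ := hUCz
          _ = ε₁ * bump δ (z l₀) := by rw [hbumpδ, mul_one]
          _ ≤ ε₁ * ∑ l, bump δ (z l) := by
              gcongr
              exact Finset.single_le_sum (f := fun l => bump δ (z l))
                (fun l _ => bump_nonneg _ _) (Finset.mem_univ l₀)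
          _ ≤ _ := le_add_of_le_of_nonneg le_rfl
              (mul_nonneg (by positivity) (add_nonneg hpair_nonneg htail_nonneg))
      · push_neg at hbigδ
        have hFz : F z = 0 := hδF z ((pi_norm_lt_iff hδ).2 hbigδ)
        have hT : ∀ l, F (fun l' => if l' = l then z l else 0) = 0 := fun l =>
          hδF _ (by rw [norm_single]; exact hbigδ l)
        simp only [hFz, hT, Finset.sum_const, smul_zero, zero_sub, abs_neg, abs_zero]
        exact add_nonneg hfirst_nonneg
          (mul_nonneg (by positivity) (add_nonneg hpair_nonneg htail_nonneg))

theorem stmt19 {Ω S : Type*} [MeasurableSpace Ω]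
    [Fintype S] [MeasurableSpace S] [MeasurableSingletonClass S]
    (P : Measure Ω) [IsProbabilityMeasure P]
    {L B : ℕ} (hL : 0 < L)
    (Y : Fin L → Ω → (Fin B → ℝ)) (hYmeas : ∀ l, Measurable (Y l))
    (A : Ω → S) (hAmeas : Measurable A)
    (hiid : iIndepFun Y P)
    (hident : ∀ l l', IdentDistrib (Y l) (Y l') P P)
    (hindep : IndepFun (fun ω l => Y l ω) A P)
    (ρ : ℝ) (hρ : 1 < ρ) (b : ℕ → ℝ) (hb_pos : ∀ n, 0 < b n)
    (lamB : Measure (Fin B → ℝ))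
    (hHL : ∀ (l : Fin L) (f : (Fin B → ℝ) → ℝ), Continuous f →
      (∃ C, ∀ y, |f y| ≤ C) → (∃ δ > (0:ℝ), ∀ y, ‖y‖ < δ → f y = 0) →
      Tendsto (fun n : ℕ => ρ ^ n * ∫ ω, f ((b n)⁻¹ • Y l ω) ∂P)
        atTop (𝓝 (∫ y, f y ∂lamB))) :
    ∀ F : (Fin L → Fin B → ℝ) → ℝ, Continuous F →
      (∃ C, ∀ z, |F z| ≤ C) → (∃ δ > (0:ℝ), ∀ z, ‖z‖ < δ → F z = 0) →
      ∀ s : S,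
        Tendsto (fun n : ℕ =>
            ρ ^ n * ∫ ω in {ω | A ω = s}, F (fun l => (b n)⁻¹ • Y l ω) ∂P)
          atTop
          (𝓝 ((P {ω | A ω = s}).toReal *
            ∑ l : Fin L, ∫ z, F (fun l' => if l' = l then z else 0) ∂lamB)) := by
  intro F hFc hFb hFv s
  obtain ⟨C, hC⟩ := hFb
  obtain ⟨δ, hδ, hδF⟩ := hFv
  have hC0 : 0 ≤ C := le_trans (abs_nonneg _) (hC 0)
  have hρ0 : (0:ℝ) < ρ := lt_trans one_pos hρ
  -- measurability of basic objects
  have hZmeas : ∀ n : ℕ, Measurable (fun ω => (fun l => (b n)⁻¹ • Y l ω)) :=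
    fun n => measurable_pi_lambda _ fun l => (hYmeas l).const_smul ((b n)⁻¹)
  have hFZmeas : ∀ n : ℕ, Measurable (fun ω => F (fun l => (b n)⁻¹ • Y l ω)) :=
    fun n => hFc.measurable.comp (hZmeas n)
  have int_F : ∀ n, Integrable (fun ω => F (fun l => (b n)⁻¹ • Y l ω)) P :=
    fun n => integrable_of_bdd (hFZmeas n) (fun ω => hC _)
  -- continuity of the block embeddings
  have hι_cont : ∀ l : Fin L, Continuous (fun y : Fin B → ℝ =>
      (fun l' => if l' = l then y else 0 : Fin L → Fin B → ℝ)) := by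
    intro l
    refine continuous_pi fun l' => ?_
    by_cases h : l' = l <;> simp [h] <;> fun_prop
  have int_ι : ∀ n (l : Fin L),
      Integrable (fun ω => F (fun l' => if l' = l then (b n)⁻¹ • Y l ω else 0)) P := by
    intro n l
    refine integrable_of_bdd ?_ (fun ω => hC _)
    exact (hFc.comp (hι_cont l)).measurable.comp ((hYmeas l).const_smul ((b n)⁻¹))
  have int_bump : ∀ n (c : ℝ) (l : Fin L),
      Integrable (fun ω => bump c ((b n)⁻¹ • Y l ω)) P := by
    intro n c l
    exact integrable_of_bdd (((continuous_bump c).measurable).comp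
      ((hYmeas l).const_smul ((b n)⁻¹))) (fun ω => bump_abs_le_one _ _)
  -- hHL applied to the embedded test functions
  have h_main_l : ∀ l : Fin L,
      Tendsto (fun n : ℕ => ρ ^ n * ∫ ω, F (fun l' => if l' = l then (b n)⁻¹ • Y l ω else 0) ∂P)
        atTop (𝓝 (∫ z, F (fun l' => if l' = l then z else 0) ∂lamB)) := by
    intro l
    exact hHL l (fun y => F (fun l' => if l' = l then y else 0))
      (hFc.comp (hι_cont l)) ⟨C, fun y => hC _⟩
      ⟨δ, hδ, fun y hy => hδF _ (by rw [norm_single]; exact hy)⟩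
  -- hHL applied to bumps
  have h_bump_l : ∀ (c : ℝ), 0 < c → ∀ l : Fin L,
      Tendsto (fun n : ℕ => ρ ^ n * ∫ ω, bump c ((b n)⁻¹ • Y l ω) ∂P)
        atTop (𝓝 (∫ y, bump c y ∂lamB)) := by
    intro c hc l
    exact hHL l (bump c) (continuous_bump c) ⟨1, fun y => bump_abs_le_one _ _⟩
      ⟨c / 2, by linarith, fun y hy => bump_eq_zero hc hy⟩
  -- Step 0: independence reduction
  have hset : MeasurableSet {ω | A ω = s} := hAmeas (measurableSet_singleton s)
  have hstep0 : ∀ n : ℕ, ∫ ω in {ω | A ω = s}, F (fun l => (b n)⁻¹ • Y l ω) ∂P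
      = (∫ ω, F (fun l => (b n)⁻¹ • Y l ω) ∂P) * (P {ω | A ω = s}).toReal := by
    intro n
    have hφ : Measurable (fun x : Fin L → Fin B → ℝ => F (fun l => (b n)⁻¹ • x l)) :=
      (hFc.comp (continuous_pi fun l => (continuous_apply l).const_smul ((b n)⁻¹))).measurable
    have hψ : Measurable (Set.indicator {s} (1 : S → ℝ)) :=
      measurable_one.indicator (measurableSet_singleton s)
    have hind : IndepFun (fun ω => F (fun l => (b n)⁻¹ • Y l ω))
        (fun ω => Set.indicator {s} (1 : S → ℝ) (A ω)) P :=
      hindep.comp hφ hψ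
    have hint1 : Integrable (fun ω => F (fun l => (b n)⁻¹ • Y l ω)) P := int_F n
    have hint2 : Integrable (fun ω => Set.indicator {s} (1 : S → ℝ) (A ω)) P := by
      refine integrable_of_bdd (hψ.comp hAmeas) (C := 1) (fun ω => ?_)
      by_cases h : A ω = s <;> simp [Set.indicator, h]
    have hmul := hind.integral_fun_mul_eq_mul_integral hint1.aestronglyMeasurable hint2.aestronglyMeasurable
    have key : ∫ ω in {ω | A ω = s}, F (fun l => (b n)⁻¹ • Y l ω) ∂P
        = ∫ ω, (fun ω => F (fun l => (b n)⁻¹ • Y l ω)) ω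
            * (fun ω => Set.indicator {s} (1 : S → ℝ) (A ω)) ω ∂P := by
      rw [← integral_indicator hset]
      congr 1
      funext ω
      by_cases h : A ω = s <;> simp [Set.indicator, h]
    have hψint : ∫ ω, Set.indicator {s} (1 : S → ℝ) (A ω) ∂P = (P {ω | A ω = s}).toReal := by
      have : (fun ω => Set.indicator {s} (1 : S → ℝ) (A ω))
          = Set.indicator {ω | A ω = s} (fun _ => (1:ℝ)) := by
        funext ω
        by_cases h : A ω = s <;> simp [Set.indicator, h]
      rw [this, integral_indicator_const (1:ℝ) hset, smul_eq_mul, mul_one, measureReal_def]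
    have hmul' : ∫ ω, (fun ω => F (fun l => (b n)⁻¹ • Y l ω)) ω
        * (fun ω => Set.indicator {s} (1 : S → ℝ) (A ω)) ω ∂P
        = (∫ ω, F (fun l => (b n)⁻¹ • Y l ω) ∂P)
          * ∫ ω, Set.indicator {s} (1 : S → ℝ) (A ω) ∂P := hmul
    rw [key, hmul', hψint]
  -- The key convergence without conditioning
  have key : Tendsto (fun n : ℕ => ρ ^ n * ∫ ω, F (fun l => (b n)⁻¹ • Y l ω) ∂P)
      atTop (𝓝 (∑ l : Fin L, ∫ z, F (fun l' => if l' = l then z else 0) ∂lamB)) := by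
    -- the error term
    have hD0 : Tendsto (fun n : ℕ => ρ ^ n * ∫ ω, (F (fun l => (b n)⁻¹ • Y l ω)
        - ∑ l, F (fun l' => if l' = l then (b n)⁻¹ • Y l ω else 0)) ∂P) atTop (𝓝 0) := by
      rw [NormedAddCommGroup.tendsto_nhds_zero]
      intro ε hε
      -- choose R
      have hRchoice : ∃ R : ℕ, δ ≤ R ∧
          (L+1) * C * (L * ∫ y, bump (R:ℝ) y ∂lamB) < ε / 2 := by
        by_cases hInt : ∃ k : ℕ, δ ≤ k ∧ Integrable (fun y => bump (k:ℝ) y) lamB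
        · obtain ⟨k₀, hk₀δ, hk₀int⟩ := hInt
          have hk₀pos : (0:ℝ) < k₀ := lt_of_lt_of_le hδ hk₀δ
          have hdom : Tendsto (fun j : ℕ => ∫ y, bump ((j + k₀ : ℕ):ℝ) y ∂lamB)
              atTop (𝓝 0) := by
            have := MeasureTheory.tendsto_integral_of_dominated_convergence
              (F := fun j : ℕ => fun y => bump ((j + k₀ : ℕ):ℝ) y)
              (f := fun _ => (0:ℝ)) (bound := fun y => bump (k₀:ℝ) y) (μ := lamB)
              (fun j => (continuous_bump _).aestronglyMeasurable)
              hk₀int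
              (fun j => ae_of_all _ (fun y => by
                rw [Real.norm_eq_abs, abs_of_nonneg (bump_nonneg _ _)]
                exact bump_anti hk₀pos (by exact_mod_cast Nat.le_add_left k₀ j) y))
              (ae_of_all _ (fun y =>
                (tendsto_bump_atTop y).comp (tendsto_add_atTop_nat k₀)))
            simpa using this
          have hlim : Tendsto (fun j : ℕ =>
              (L+1) * C * (L * ∫ y, bump ((j + k₀ : ℕ):ℝ) y ∂lamB)) atTop (𝓝 0) := by
            have := (hdom.const_mul (L:ℝ)).const_mul ((L:ℝ)+1)
            simpa [mul_assoc] using ((hdom.const_mul (L:ℝ)).const_mul ((L+1) * C))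
          have hev := hlim.eventually_lt_const (by positivity : (0:ℝ) < ε / 2)
          obtain ⟨j, hj⟩ := hev.exists
          exact ⟨j + k₀, le_trans hk₀δ (by exact_mod_cast Nat.le_add_left k₀ j), hj⟩
        · push_neg at hInt
          refine ⟨⌈δ⌉₊ + 1, ?_, ?_⟩
          · calc δ ≤ (⌈δ⌉₊ : ℝ) := Nat.le_ceil δ
              _ ≤ ((⌈δ⌉₊ + 1 : ℕ) : ℝ) := by exact_mod_cast Nat.le_succ _
          · have h0 : ∫ y, bump ((⌈δ⌉₊ + 1 : ℕ):ℝ) y ∂lamB = 0 := by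
              refine integral_undef (hInt (⌈δ⌉₊ + 1) ?_)
              calc δ ≤ (⌈δ⌉₊ : ℝ) := Nat.le_ceil δ
                _ ≤ ((⌈δ⌉₊ + 1 : ℕ) : ℝ) := by exact_mod_cast Nat.le_succ _
            rw [h0]
            simpa using (by positivity : (0:ℝ) < ε / 2)
      obtain ⟨R, hδR, hRsmall⟩ := hRchoice
      have hR0 : (0:ℝ) < R := lt_of_lt_of_le hδ hδR
      -- the limit of the δ-bump sums
      set Λδ : ℝ := ∫ y, bump δ y ∂lamB with hΛδ
      have hΛδ0 : 0 ≤ Λδ := integral_nonneg (fun y => bump_nonneg _ _)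
      set ε₁ : ℝ := ε / 2 / ((L:ℝ) * Λδ + 1) with hε₁def
      have hε₁pos : 0 < ε₁ := by positivity
      have hε₁bound : ε₁ * ((L:ℝ) * Λδ) ≤ ε / 2 := by
        rw [hε₁def]
        rw [div_mul_eq_mul_div, div_le_iff₀ (by positivity)]
        have hLΛ : (0:ℝ) ≤ (L:ℝ) * Λδ := by positivity
        nlinarith
      -- uniform continuity on the ball of radius R
      have hUCex : ∃ η > (0:ℝ), η ≤ δ / 2 ∧
          ∀ u v : Fin L → Fin B → ℝ, ‖u‖ ≤ R → ‖v‖ ≤ R → ‖u - v‖ < η → |F u - F v| ≤ ε₁ := by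
        have hK : IsCompact (Metric.closedBall (0 : Fin L → Fin B → ℝ) R) :=
          isCompact_closedBall _ _
        have hUC : UniformContinuousOn F (Metric.closedBall 0 R) :=
          hK.uniformContinuousOn_of_continuous (hFc.continuousOn)
        rw [Metric.uniformContinuousOn_iff] at hUC
        obtain ⟨η₀, hη₀, hη₀prop⟩ := hUC ε₁ hε₁pos
        refine ⟨min η₀ (δ/2), by positivity, min_le_right _ _, fun u v hu hv huv => ?_⟩
        have hu' : u ∈ Metric.closedBall (0 : Fin L → Fin B → ℝ) R := by
          simpa [Metric.mem_closedBall, dist_zero_right] using hu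
        have hv' : v ∈ Metric.closedBall (0 : Fin L → Fin B → ℝ) R := by
          simpa [Metric.mem_closedBall, dist_zero_right] using hv
        have hd : dist u v < η₀ := by
          rw [dist_eq_norm]
          exact lt_of_lt_of_le huv (min_le_left _ _)
        have := hη₀prop u hu' v hv' hd
        rw [Real.dist_eq] at this
        exact this.le
      obtain ⟨η, hη, hηδ2, hUC⟩ := hUCex
      -- the bound functions
      have hbound : ∀ n : ℕ, ∀ ω : Ω,
          |F (fun l => (b n)⁻¹ • Y l ω)
            - ∑ l, F (fun l' => if l' = l then (b n)⁻¹ • Y l ω else 0)| ≤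
          ε₁ * ∑ l, bump δ ((b n)⁻¹ • Y l ω)
          + (L + 1) * C * ((∑ p ∈ (Finset.univ : Finset (Fin L)).offDiag,
                bump η ((b n)⁻¹ • Y p.1 ω) * bump η ((b n)⁻¹ • Y p.2 ω))
              + ∑ l, bump (R:ℝ) ((b n)⁻¹ • Y l ω)) := by
        intro n ω
        exact pointwise_bound F C δ η R ε₁ hC hδ hδF hη hηδ2 hδR hε₁pos.le hUC
          (fun l => (b n)⁻¹ • Y l ω)
      -- integrability of pieces
      have int_pair : ∀ n (p : Fin L × Fin L),
          Integrable (fun ω => bump η ((b n)⁻¹ • Y p.1 ω) * bump η ((b n)⁻¹ • Y p.2 ω)) P := by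
        intro n p
        refine integrable_of_bdd (((continuous_bump η).measurable.comp
          ((hYmeas p.1).const_smul ((b n)⁻¹))).mul ((continuous_bump η).measurable.comp
          ((hYmeas p.2).const_smul ((b n)⁻¹)))) (C := 1) (fun ω => ?_)
        rw [abs_mul]
        calc |bump η ((b n)⁻¹ • Y p.1 ω)| * |bump η ((b n)⁻¹ • Y p.2 ω)|
            ≤ 1 * 1 := mul_le_mul (bump_abs_le_one _ _) (bump_abs_le_one _ _)
              (abs_nonneg _) one_pos.le
          _ = 1 := by ring
      -- define B n
      set Bn : ℕ → ℝ := fun n =>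
        ε₁ * ∑ l, (ρ ^ n * ∫ ω, bump δ ((b n)⁻¹ • Y l ω) ∂P)
        + (L + 1) * C * ((∑ p ∈ (Finset.univ : Finset (Fin L)).offDiag,
              ρ ^ n * ∫ ω, bump η ((b n)⁻¹ • Y p.1 ω) * bump η ((b n)⁻¹ • Y p.2 ω) ∂P)
            + ∑ l, (ρ ^ n * ∫ ω, bump (R:ℝ) ((b n)⁻¹ • Y l ω) ∂P)) with hBn
      -- per-n bound
      have hperN : ∀ n : ℕ, ‖ρ ^ n * ∫ ω, (F (fun l => (b n)⁻¹ • Y l ω)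
          - ∑ l, F (fun l' => if l' = l then (b n)⁻¹ • Y l ω else 0)) ∂P‖ ≤ Bn n := by
        intro n
        have hρn : (0:ℝ) < ρ ^ n := pow_pos hρ0 n
        have int_diff : Integrable (fun ω => F (fun l => (b n)⁻¹ • Y l ω)
            - ∑ l, F (fun l' => if l' = l then (b n)⁻¹ • Y l ω else 0)) P :=
          (int_F n).sub (integrable_finset_sum _ fun l _ => int_ι n l)
        have int_bd : Integrable (fun ω =>
            ε₁ * ∑ l, bump δ ((b n)⁻¹ • Y l ω)
            + (L + 1) * C * ((∑ p ∈ (Finset.univ : Finset (Fin L)).offDiag,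
                  bump η ((b n)⁻¹ • Y p.1 ω) * bump η ((b n)⁻¹ • Y p.2 ω))
                + ∑ l, bump (R:ℝ) ((b n)⁻¹ • Y l ω))) P := by
          refine (((integrable_finset_sum _ fun l _ => int_bump n δ l).const_mul ε₁).add
            ((((integrable_finset_sum _ fun p _ => int_pair n p)).add
              (integrable_finset_sum _ fun l _ => int_bump n (R:ℝ) l)).const_mul _))
        have habs : |∫ ω, (F (fun l => (b n)⁻¹ • Y l ω)
            - ∑ l, F (fun l' => if l' = l then (b n)⁻¹ • Y l ω else 0)) ∂P|
            ≤ ∫ ω, (ε₁ * ∑ l, bump δ ((b n)⁻¹ • Y l ω)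
            + (L + 1) * C * ((∑ p ∈ (Finset.univ : Finset (Fin L)).offDiag,
                  bump η ((b n)⁻¹ • Y p.1 ω) * bump η ((b n)⁻¹ • Y p.2 ω))
                + ∑ l, bump (R:ℝ) ((b n)⁻¹ • Y l ω))) ∂P := by
          calc |∫ ω, (F (fun l => (b n)⁻¹ • Y l ω)
              - ∑ l, F (fun l' => if l' = l then (b n)⁻¹ • Y l ω else 0)) ∂P|
              ≤ ∫ ω, |F (fun l => (b n)⁻¹ • Y l ω)
                - ∑ l, F (fun l' => if l' = l then (b n)⁻¹ • Y l ω else 0)| ∂P :=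
              by simpa [Real.norm_eq_abs] using
                norm_integral_le_integral_norm (μ := P) (fun ω => F (fun l => (b n)⁻¹ • Y l ω)
                  - ∑ l, F (fun l' => if l' = l then (b n)⁻¹ • Y l ω else 0))
            _ ≤ _ := integral_mono int_diff.abs int_bd (fun ω => hbound n ω)
        have i1 : Integrable (fun ω => ∑ l, bump δ ((b n)⁻¹ • Y l ω)) P :=
          integrable_finset_sum _ fun l _ => int_bump n δ l
        have i2 : Integrable (fun ω => ∑ p ∈ (Finset.univ : Finset (Fin L)).offDiag,
            bump η ((b n)⁻¹ • Y p.1 ω) * bump η ((b n)⁻¹ • Y p.2 ω)) P :=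
          integrable_finset_sum _ fun p _ => int_pair n p
        have i3 : Integrable (fun ω => ∑ l, bump (R:ℝ) ((b n)⁻¹ • Y l ω)) P :=
          integrable_finset_sum _ fun l _ => int_bump n (R:ℝ) l
        have h1 : Integrable (fun ω => ε₁ * ∑ l, bump δ ((b n)⁻¹ • Y l ω)) P := i1.const_mul _
        have i23 : Integrable (fun ω => (∑ p ∈ (Finset.univ : Finset (Fin L)).offDiag,
            bump η ((b n)⁻¹ • Y p.1 ω) * bump η ((b n)⁻¹ • Y p.2 ω))
            + ∑ l, bump (R:ℝ) ((b n)⁻¹ • Y l ω)) P := i2.add i3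
        have h2 : Integrable (fun ω => (L + 1) * C *
            ((∑ p ∈ (Finset.univ : Finset (Fin L)).offDiag,
              bump η ((b n)⁻¹ • Y p.1 ω) * bump η ((b n)⁻¹ • Y p.2 ω))
            + ∑ l, bump (R:ℝ) ((b n)⁻¹ • Y l ω))) P := i23.const_mul _
        have hsplit : ∫ ω, (ε₁ * ∑ l, bump δ ((b n)⁻¹ • Y l ω)
            + (L + 1) * C * ((∑ p ∈ (Finset.univ : Finset (Fin L)).offDiag,
                  bump η ((b n)⁻¹ • Y p.1 ω) * bump η ((b n)⁻¹ • Y p.2 ω))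
                + ∑ l, bump (R:ℝ) ((b n)⁻¹ • Y l ω))) ∂P
            = ε₁ * ∑ l, (∫ ω, bump δ ((b n)⁻¹ • Y l ω) ∂P)
            + (L + 1) * C * ((∑ p ∈ (Finset.univ : Finset (Fin L)).offDiag,
                  ∫ ω, bump η ((b n)⁻¹ • Y p.1 ω) * bump η ((b n)⁻¹ • Y p.2 ω) ∂P)
                + ∑ l, (∫ ω, bump (R:ℝ) ((b n)⁻¹ • Y l ω) ∂P)) := by
          rw [integral_add h1 h2, integral_const_mul, integral_const_mul, integral_add i2 i3,
            integral_finset_sum _ (fun l _ => int_bump n δ l),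
            integral_finset_sum _ (fun p _ => int_pair n p),
            integral_finset_sum _ (fun l _ => int_bump n (R:ℝ) l)]
        rw [Real.norm_eq_abs, abs_mul, abs_of_nonneg hρn.le]
        calc ρ ^ n * |∫ ω, (F (fun l => (b n)⁻¹ • Y l ω)
            - ∑ l, F (fun l' => if l' = l then (b n)⁻¹ • Y l ω else 0)) ∂P|
            ≤ ρ ^ n * (ε₁ * ∑ l, (∫ ω, bump δ ((b n)⁻¹ • Y l ω) ∂P)
            + (L + 1) * C * ((∑ p ∈ (Finset.univ : Finset (Fin L)).offDiag,
                  ∫ ω, bump η ((b n)⁻¹ • Y p.1 ω) * bump η ((b n)⁻¹ • Y p.2 ω) ∂P)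
                + ∑ l, (∫ ω, bump (R:ℝ) ((b n)⁻¹ • Y l ω) ∂P))) := by
              refine mul_le_mul_of_nonneg_left ?_ hρn.le
              rw [← hsplit]; exact habs
          _ = Bn n := by
              simp only [hBn, ← Finset.mul_sum]
              ring
        -- fallback
      -- limit of Bn
      set Λη : ℝ := ∫ y, bump η y ∂lamB with hΛη
      set ΛR : ℝ := ∫ y, bump (R:ℝ) y ∂lamB with hΛR
      have hρne : ρ ≠ 0 := ne_of_gt hρ0
      have t2 : ∀ p ∈ (Finset.univ : Finset (Fin L)).offDiag,
          Tendsto (fun n : ℕ => ρ ^ n *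
            ∫ ω, bump η ((b n)⁻¹ • Y p.1 ω) * bump η ((b n)⁻¹ • Y p.2 ω) ∂P) atTop (𝓝 0) := by
        intro p hp
        have hpne : p.1 ≠ p.2 := (Finset.mem_offDiag.1 hp).2.2
        have hfac : ∀ n : ℕ, ∫ ω, bump η ((b n)⁻¹ • Y p.1 ω) * bump η ((b n)⁻¹ • Y p.2 ω) ∂P
            = (∫ ω, bump η ((b n)⁻¹ • Y p.1 ω) ∂P) * ∫ ω, bump η ((b n)⁻¹ • Y p.2 ω) ∂P := by
          intro n
          have hmeasb : Measurable (fun y : Fin B → ℝ => bump η ((b n)⁻¹ • y)) :=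
            (continuous_bump η).measurable.comp (measurable_id.const_smul ((b n)⁻¹))
          have hind2 : IndepFun (fun ω => bump η ((b n)⁻¹ • Y p.1 ω))
              (fun ω => bump η ((b n)⁻¹ • Y p.2 ω)) P :=
            (hiid.indepFun hpne).comp hmeasb hmeasb
          exact hind2.integral_fun_mul_eq_mul_integral (int_bump n η p.1).aestronglyMeasurable (int_bump n η p.2).aestronglyMeasurable
        have hmulten : Tendsto (fun n : ℕ =>
            (ρ ^ n * ∫ ω, bump η ((b n)⁻¹ • Y p.1 ω) ∂P)
            * ((ρ⁻¹) ^ n * (ρ ^ n * ∫ ω, bump η ((b n)⁻¹ • Y p.2 ω) ∂P)))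
            atTop (𝓝 (Λη * (0 * Λη))) :=
          (h_bump_l η hη p.1).mul ((tendsto_pow_atTop_nhds_zero_of_lt_one
            (by positivity) (by rw [inv_lt_one_iff₀]; right; exact hρ)).mul (h_bump_l η hη p.2))
        have hcg : Tendsto (fun n : ℕ => ρ ^ n *
            ∫ ω, bump η ((b n)⁻¹ • Y p.1 ω) * bump η ((b n)⁻¹ • Y p.2 ω) ∂P)
            atTop (𝓝 (Λη * (0 * Λη))) := by
          refine hmulten.congr (fun n => ?_)
          rw [hfac n, inv_pow]
          have hpn : (ρ:ℝ) ^ n ≠ 0 := pow_ne_zero _ hρne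
          field_simp
        simpa using hcg
      have t2sum : Tendsto (fun n : ℕ => ∑ p ∈ (Finset.univ : Finset (Fin L)).offDiag,
          ρ ^ n * ∫ ω, bump η ((b n)⁻¹ • Y p.1 ω) * bump η ((b n)⁻¹ • Y p.2 ω) ∂P)
          atTop (𝓝 0) := by
        have hts := tendsto_finset_sum ((Finset.univ : Finset (Fin L)).offDiag) t2
        simpa using hts
      have t1 : Tendsto (fun n : ℕ => ∑ l : Fin L, (ρ ^ n * ∫ ω, bump δ ((b n)⁻¹ • Y l ω) ∂P))
          atTop (𝓝 (∑ _l : Fin L, Λδ)) :=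
        tendsto_finset_sum _ (fun l _ => h_bump_l δ hδ l)
      have t3 : Tendsto (fun n : ℕ => ∑ l : Fin L, (ρ ^ n * ∫ ω, bump (R:ℝ) ((b n)⁻¹ • Y l ω) ∂P))
          atTop (𝓝 (∑ _l : Fin L, ΛR)) :=
        tendsto_finset_sum _ (fun l _ => h_bump_l (R:ℝ) hR0 l)
      have hBnlim : Tendsto Bn atTop
          (𝓝 (ε₁ * (∑ _l : Fin L, Λδ) + (L + 1) * C * (0 + ∑ _l : Fin L, ΛR))) :=
        (t1.const_mul ε₁).add ((t2sum.add t3).const_mul ((L + 1) * C))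
      have hfin : ε₁ * (∑ _l : Fin L, Λδ) + (L + 1) * C * (0 + ∑ _l : Fin L, ΛR) < ε := by
        have e1 : (∑ _l : Fin L, Λδ) = (L:ℝ) * Λδ := by
          simp [Finset.sum_const, nsmul_eq_mul]
        have e2 : (∑ _l : Fin L, ΛR) = (L:ℝ) * ΛR := by
          simp [Finset.sum_const, nsmul_eq_mul]
        rw [e1, e2, zero_add]
        have h2 : ((L:ℝ) + 1) * C * ((L:ℝ) * ΛR) < ε / 2 := by
          exact_mod_cast hRsmall
        linarith [hε₁bound]
      filter_upwards [hBnlim.eventually_lt_const hfin] with n hn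
      exact lt_of_le_of_lt (hperN n) hn
    -- combine
    have hDeq : ∀ n : ℕ, ρ ^ n * ∫ ω, F (fun l => (b n)⁻¹ • Y l ω) ∂P
        = ρ ^ n * ∫ ω, (F (fun l => (b n)⁻¹ • Y l ω)
            - ∑ l, F (fun l' => if l' = l then (b n)⁻¹ • Y l ω else 0)) ∂P
          + ∑ l, (ρ ^ n * ∫ ω, F (fun l' => if l' = l then (b n)⁻¹ • Y l ω else 0) ∂P) := by
      intro n
      rw [integral_sub (int_F n) (integrable_finset_sum _ fun l _ => int_ι n l),
        integral_finset_sum _ (fun l _ => int_ι n l)]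
      rw [mul_sub, ← Finset.mul_sum]
      ring
    have hsum : Tendsto (fun n : ℕ => ∑ l : Fin L,
        (ρ ^ n * ∫ ω, F (fun l' => if l' = l then (b n)⁻¹ • Y l ω else 0) ∂P)) atTop
        (𝓝 (∑ l : Fin L, ∫ z, F (fun l' => if l' = l then z else 0) ∂lamB)) :=
      tendsto_finset_sum _ (fun l _ => h_main_l l)
    have := hD0.add hsum
    rw [zero_add] at this
    exact this.congr (fun n => (hDeq n).symm)
  -- conclude
  have := key.const_mul ((P {ω | A ω = s}).toReal)
  refine this.congr (fun n => ?_)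
  rw [hstep0 n]
  ring
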